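/- arXiv:2307.00898 — 6 statements merged into one kernel-verified Lean document; each statement's English description precedes it below -/
import Mathlib

section
/- Let v = (v_1,…,v_n)^T ∈ R_+^n be a Q-basis of a number field K of degree n, and suppose M is an integer unimodular matrix with M v = ε v for some real ε. Then ε ∈ K, ε is an algebraic unit (i.e., ε ∈ O_K with N_{K/Q}(ε) = ±1), and M = (T_ε^v)^T, the transpose of the matrix of multiplication by ε in the basis v. -/
open Matrix

private lemma aux_integral {n : ℕ} {K : Type*} [Field K] [Algebra ℚ K]
    (b : Module.Basis (Fin n) ℚ K) (x : K) (A : Matrix (Fin n) (Fin n) ℤ)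
    (h : LinearMap.toMatrix b b (LinearMap.mulLeft ℚ x) = A.map ((↑) : ℤ → ℚ)) :
    IsIntegral ℤ x := by
  haveI : Module.Finite ℚ K := Module.Finite.of_basis b
  haveI : Module.Free ℚ K := Module.Free.of_basis b
  have h1 : (LinearMap.mulLeft ℚ x).charpoly = A.charpoly.map (Int.castRingHom ℚ) := by
    rw [← LinearMap.charpoly_toMatrix (LinearMap.mulLeft ℚ x) b, h]
    exact Matrix.charpoly_map A (Int.castRingHom ℚ)
  have h2 := LinearMap.aeval_self_charpoly (LinearMap.mulLeft ℚ x)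
  rw [h1] at h2
  have h3 : LinearMap.mulLeft ℚ (Polynomial.aeval x (A.charpoly.map (Int.castRingHom ℚ))) = 0 := by
    have : LinearMap.mulLeft ℚ x = Algebra.lmul ℚ K x := rfl
    rw [this] at h2
    rw [show LinearMap.mulLeft ℚ (Polynomial.aeval x (A.charpoly.map (Int.castRingHom ℚ)))
        = Algebra.lmul ℚ K (Polynomial.aeval x (A.charpoly.map (Int.castRingHom ℚ))) from rfl,
      ← Polynomial.aeval_algHom_apply (Algebra.lmul ℚ K) x]
    exact h2
  have h4 : Polynomial.aeval x (A.charpoly.map (Int.castRingHom ℚ)) = 0 := by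
    have := DFunLike.congr_fun h3 1
    simpa using this
  rw [show (Int.castRingHom ℚ) = algebraMap ℤ ℚ from rfl,
    Polynomial.aeval_map_algebraMap] at h4
  exact ⟨A.charpoly, A.charpoly_monic, by rwa [Polynomial.aeval_def] at h4⟩

set_option synthInstance.maxHeartbeats 1000000 in

/-- If `v ∈ ℝ₊ⁿ` is a ℚ-basis of a number field `K` of degree `n`, and `M` is a unimodular
integer matrix with `M v = ε v` for a real `ε`, then `ε ∈ K`, `ε` is an algebraic unit, and
`M` is the transpose of the matrix of multiplication by `ε` in the basis `v`. -/
theorem stmt6 (n : ℕ) (K : IntermediateField ℚ ℝ) (b : Module.Basis (Fin n) ℚ K)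
    (hpos : ∀ i, 0 < (b i : ℝ))
    (M : Matrix (Fin n) (Fin n) ℤ) (hdet : M.det = 1 ∨ M.det = -1)
    (ε : ℝ)
    (hM : (M.map ((↑) : ℤ → ℝ)) *ᵥ (fun i => (b i : ℝ)) = ε • fun i => (b i : ℝ)) :
    ∃ e : K, (e : ℝ) = ε ∧ e ≠ 0 ∧ IsIntegral ℤ e ∧ IsIntegral ℤ e⁻¹ ∧
      M.map ((↑) : ℤ → ℚ) = (LinearMap.toMatrix b b (LinearMap.mulLeft ℚ e))ᵀ := by
  obtain ⟨i0⟩ := b.index_nonempty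
  have hrow : ∀ i, (∑ j, (M i j : ℝ) * (b j : ℝ)) = ε * (b i : ℝ) := by
    intro i
    have := congrFun hM i
    simpa [Matrix.mulVec, dotProduct, Matrix.map_apply] using this
  set e : K := (b i0)⁻¹ * ∑ j, (M i0 j : ℚ) • b j with he_def
  have hcoe_sum : ∀ i, ((∑ j, (M i j : ℚ) • b j : K) : ℝ) = ∑ j, (M i j : ℝ) * (b j : ℝ) := by
    intro i
    rw [AddSubmonoidClass.coe_finset_sum]
    refine Finset.sum_congr rfl fun j _ => ?_
    rw [IntermediateField.coe_smul, Rat.smul_def]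
    push_cast
    ring
  have he : (e : ℝ) = ε := by
    have h0 : (b i0 : ℝ) ≠ 0 := ne_of_gt (hpos i0)
    have : (e : ℝ) = (b i0 : ℝ)⁻¹ * ((∑ j, (M i0 j : ℚ) • b j : K) : ℝ) := by
      rw [he_def, MulMemClass.coe_mul, IntermediateField.coe_inv]
    rw [this, hcoe_sum, hrow]
    field_simp
  have hkey : ∀ i, e * b i = ∑ j, (M i j : ℚ) • b j := by
    intro i
    have hinj : Function.Injective ((↑) : K → ℝ) := Subtype.coe_injective
    apply hinj
    show ((e * b i : K) : ℝ) = ((∑ j, (M i j : ℚ) • b j : K) : ℝ)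
    rw [MulMemClass.coe_mul, he, hcoe_sum i, hrow i]
  have hmat : LinearMap.toMatrix b b (LinearMap.mulLeft ℚ e) = (M.map ((↑) : ℤ → ℚ))ᵀ := by
    ext i j
    rw [LinearMap.toMatrix_apply, LinearMap.mulLeft_apply, hkey j, Module.Basis.repr_sum_self]
    rfl
  have hne : e ≠ 0 := by
    intro h
    have h0 : (0 : K) = ∑ j, (M i0 j : ℚ) • b j := by
      rw [← hkey i0, h, zero_mul]
    have := Fintype.linearIndependent_iff.mp b.linearIndependent (fun j => (M i0 j : ℚ)) h0.symm
    have hz : M.det = 0 := Matrix.det_eq_zero_of_row_eq_zero i0 (fun j => by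
      have h5 := this j
      exact_mod_cast h5)
    rcases hdet with h | h <;> simp [hz] at h
  have hint : IsIntegral ℤ e := aux_integral b e Mᵀ (by
    rw [hmat]; ext i j; simp [Matrix.transpose_apply, Matrix.map_apply])
  -- inverse matrix
  set N : Matrix (Fin n) (Fin n) ℤ := M.det • M.adjugate with hN
  have hdet2 : M.det * M.det = 1 := by rcases hdet with h | h <;> rw [h] <;> norm_num
  have hMN : M * N = 1 := by
    rw [hN, Matrix.mul_smul, Matrix.mul_adjugate, smul_smul, hdet2, one_smul]
  have hBA : (Nᵀ.map ((↑) : ℤ → ℚ)) * (M.map ((↑) : ℤ → ℚ))ᵀ = 1 := by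
    have : (Nᵀ.map ((↑) : ℤ → ℚ)) = (N.map ((↑) : ℤ → ℚ))ᵀ := by
      ext i j; simp [Matrix.transpose_apply, Matrix.map_apply]
    rw [this, ← Matrix.transpose_mul]
    have hmap : (M * N).map ((↑) : ℤ → ℚ) = (M.map ((↑) : ℤ → ℚ)) * (N.map ((↑) : ℤ → ℚ)) := by
      exact Matrix.map_mul (f := Int.castRingHom ℚ)
    rw [← hmap, hMN]
    rw [Matrix.map_one _ Int.cast_zero Int.cast_one, Matrix.transpose_one]
  have hXA : (LinearMap.toMatrix b b (LinearMap.mulLeft ℚ e⁻¹)) * (M.map ((↑) : ℤ → ℚ))ᵀ = 1 := by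
    rw [← hmat, ← LinearMap.toMatrix_comp b b b, ← LinearMap.mulLeft_mul, inv_mul_cancel₀ hne,
      LinearMap.mulLeft_one, LinearMap.toMatrix_id]
  have hinv_mat : LinearMap.toMatrix b b (LinearMap.mulLeft ℚ e⁻¹) = Nᵀ.map ((↑) : ℤ → ℚ) := by
    rw [← Matrix.inv_eq_left_inv hXA, Matrix.inv_eq_left_inv hBA]
  have hint' : IsIntegral ℤ e⁻¹ := aux_integral b e⁻¹ Nᵀ hinv_mat
  exact ⟨e, he, hne, hint, hint', by rw [hmat, Matrix.transpose_transpose]⟩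
end

section
/- Let M be a primitive nonnegative square real matrix and let v ∈ R_+^n (all components strictly positive) be an eigenvector of M with eigenvalue λ. Let w ∈ R^n be another eigenvector of M with eigenvalue μ ≠ λ. Then w is not a vector with all nonnegative components; i.e., w ∉ R_{≥0}^n \ {0}. -/
open Matrix

lemma pow_mulVec_eig {n : ℕ} (M : Matrix (Fin n) (Fin n) ℝ) (x : Fin n → ℝ) (c : ℝ)
    (h : M *ᵥ x = c • x) (k : ℕ) : (M ^ k) *ᵥ x = c ^ k • x := by
  induction k with
  | zero => simp
  | succ k ih =>
      rw [pow_succ, ← Matrix.mulVec_mulVec, h, Matrix.mulVec_smul, ih, smul_smul,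
        pow_succ, mul_comm]

lemma pos_mulVec_pos {n : ℕ} {A : Matrix (Fin n) (Fin n) ℝ} (hA : ∀ i j, 0 < A i j)
    {u : Fin n → ℝ} (hu : ∀ i, 0 ≤ u i) {i1 : Fin n} (hi1 : 0 < u i1) (i : Fin n) :
    0 < (A *ᵥ u) i := by
  simp only [Matrix.mulVec, dotProduct]
  apply Finset.sum_pos'
  · intro j _; exact mul_nonneg (hA i j).le (hu j)
  · exact ⟨i1, Finset.mem_univ _, mul_pos (hA i i1) hi1⟩

/-- The min-ratio comparison: if `A > 0`, `x, y > 0` are eigenvectors for `a` and `b`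
and are not proportional, then `a < b`. -/
lemma min_ratio_lt {n : ℕ} {A : Matrix (Fin n) (Fin n) ℝ} (hA : ∀ i j, 0 < A i j)
    (x y : Fin n → ℝ) (hx : ∀ i, 0 < x i) (hy : ∀ i, 0 < y i) (a b : ℝ)
    (hAx : A *ᵥ x = a • x) (hAy : A *ᵥ y = b • y) (hnp : ∀ c : ℝ, y ≠ c • x)
    (hne : Nonempty (Fin n)) : a < b := by
  obtain ⟨j, -, hj⟩ := Finset.exists_min_image Finset.univ (fun i => y i / x i)
    (Finset.univ_nonempty)
  set c := y j / x j with hc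
  have hcpos : 0 < c := div_pos (hy j) (hx j)
  set u : Fin n → ℝ := y - c • x with hu
  have hunn : ∀ i, 0 ≤ u i := by
    intro i
    have h1 : c ≤ y i / x i := hj i (Finset.mem_univ i)
    have h2 : c * x i ≤ y i := (le_div_iff₀ (hx i)).mp h1
    simp only [hu, Pi.sub_apply, Pi.smul_apply, smul_eq_mul]
    linarith
  have huj : u j = 0 := by
    have h3 : c * x j = y j := div_mul_cancel₀ _ (hx j).ne'
    simp only [hu, Pi.sub_apply, Pi.smul_apply, smul_eq_mul]
    linarith
  have hune : u ≠ 0 := by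
    intro h0
    apply hnp c
    have : y - c • x = 0 := h0
    funext i
    have := congrFun this i
    simp only [Pi.sub_apply, Pi.zero_apply] at this
    simp only [Pi.smul_apply, smul_eq_mul] at this ⊢
    linarith
  obtain ⟨i1, hi1⟩ := Function.ne_iff.mp hune
  have hi1' : 0 < u i1 := lt_of_le_of_ne (hunn i1) (Ne.symm hi1)
  have hpos : 0 < (A *ᵥ u) j := pos_mulVec_pos hA hunn hi1' j
  have hAu : A *ᵥ u = b • y - c • (a • x) := by
    rw [hu, Matrix.mulVec_sub, Matrix.mulVec_smul, hAx, hAy]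
  rw [hAu] at hpos
  simp only [Pi.sub_apply, Pi.smul_apply, smul_eq_mul] at hpos
  have hyj : y j = c * x j := (div_mul_cancel₀ _ (hx j).ne').symm
  rw [hyj] at hpos
  have hcx : 0 < c * x j := mul_pos hcpos (hx j)
  nlinarith

/-- Perron–Frobenius-type statement: if `M` is a primitive nonnegative real matrix,
`v` a strictly positive eigenvector with eigenvalue `λ`, and `w ≠ 0` an eigenvector for a
different eigenvalue `μ`, then `w` cannot have all components nonnegative. -/
theorem stmt11 (n : ℕ) (M : Matrix (Fin n) (Fin n) ℝ)
    (hnn : ∀ i j, 0 ≤ M i j) (hprim : ∃ k : ℕ, ∀ i j, 0 < (M ^ k) i j)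
    (v : Fin n → ℝ) (hv : ∀ i, 0 < v i) (lam : ℝ) (hMv : M *ᵥ v = lam • v)
    (w : Fin n → ℝ) (hw : w ≠ 0) (mu : ℝ) (hMw : M *ᵥ w = mu • w) (hmu : mu ≠ lam) :
    ¬ ∀ i, 0 ≤ w i := by
  intro hwnn
  obtain ⟨k, hA⟩ := hprim
  set A := M ^ k with hAdef
  have hAv : A *ᵥ v = lam ^ k • v := pow_mulVec_eig M v lam hMv k
  have hAw : A *ᵥ w = mu ^ k • w := pow_mulVec_eig M w mu hMw k
  obtain ⟨i0, hi0⟩ := Function.ne_iff.mp hw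
  have hi0' : 0 < w i0 := lt_of_le_of_ne (hwnn i0) (Ne.symm hi0)
  have hne : Nonempty (Fin n) := ⟨i0⟩
  -- w is strictly positive
  have hwpos : ∀ i, 0 < w i := by
    intro i
    have h1 : 0 < (A *ᵥ w) i := pos_mulVec_pos hA hwnn hi0' i
    rw [hAw] at h1
    simp only [Pi.smul_apply, smul_eq_mul] at h1
    rcases lt_or_eq_of_le (hwnn i) with h | h
    · exact h
    · exfalso; rw [← h, mul_zero] at h1; exact lt_irrefl 0 h1
  -- w is not proportional to v
  have hnotprop : ∀ c : ℝ, w ≠ c • v := by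
    intro c hcw
    apply hmu
    have hcpos : 0 < c := by
      have h1 : 0 < c * v i0 := by
        have := hwpos i0; rw [hcw] at this
        simpa using this
      by_contra h; push_neg at h
      nlinarith [hv i0]
    have h1 : M *ᵥ w = (c * lam) • v := by
      rw [hcw, Matrix.mulVec_smul, hMv, smul_smul]
    have h2 : (mu * c) • v = (c * lam) • v := by
      rw [← smul_smul, ← hcw, ← hMw, h1]
    have h3 : mu * c * v i0 = c * lam * v i0 := by
      have := congrFun h2 i0; simpa using this
    have h4 : mu * c = c * lam := mul_right_cancel₀ (hv i0).ne' h3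
    have h5 : c * mu = c * lam := by linarith [h4]
    exact mul_left_cancel₀ hcpos.ne' h5
  have hnotprop' : ∀ c : ℝ, v ≠ c • w := by
    intro c hcv
    have hcne : c ≠ 0 := by
      intro h0; rw [h0, zero_smul] at hcv
      exact (hv i0).ne' (congrFun hcv i0)
    apply hnotprop c⁻¹
    rw [hcv]; funext i
    simp [smul_smul, inv_mul_cancel₀ hcne]
    field_simp
  have h1 : lam ^ k < mu ^ k := min_ratio_lt hA v w hv hwpos _ _ hAv hAw hnotprop hne
  have h2 : mu ^ k < lam ^ k := min_ratio_lt hA w v hwpos hv _ _ hAw hAv hnotprop' hne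
  linarith
end

section
/- Let v ∈ R_+^n be a Q-basis of a number field K of degree n, let ε ∈ O_K^×, and let M = (T_ε^v)^T. Suppose M is a primitive nonnegative integer matrix. Let σ be an embedding of K into C such that the conjugate vector σ(v) = (σ(v_1),…,σ(v_n))^T differs from v. Then σ(v) ∉ R_+^n; i.e., some component of σ(v) is not a positive real number. -/
open Matrix


lemma perron_le {n : ℕ} (A : Matrix (Fin n) (Fin n) ℝ) (hA : ∀ i j, 0 < A i j)
    (v w : Fin n → ℝ) (hv : ∀ i, 0 < v i) (hw : ∀ i, 0 < w i)
    (lam mu : ℝ) (hAv : A *ᵥ v = lam • v) (hAw : A *ᵥ w = mu • w) (hn : n ≠ 0) :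
    lam ≤ mu := by
  have hne : (Finset.univ : Finset (Fin n)).Nonempty :=
    ⟨⟨0, Nat.pos_of_ne_zero hn⟩, Finset.mem_univ _⟩
  obtain ⟨i0, -, hi0⟩ := Finset.exists_max_image Finset.univ (fun i => v i / w i) hne
  set t := v i0 / w i0 with ht
  have htpos : 0 < t := div_pos (hv i0) (hw i0)
  have hle : ∀ i, v i ≤ t * w i := by
    intro i
    have := hi0 i (Finset.mem_univ i)
    calc v i = (v i / w i) * w i := by rw [div_mul_cancel₀ _ (hw i).ne']
    _ ≤ t * w i := by
      apply mul_le_mul_of_nonneg_right this (hw i).le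
  have h1 : lam * v i0 = ∑ j, A i0 j * v j := by
    have := congrFun hAv i0
    simpa [mulVec, dotProduct, mul_comm] using this.symm
  have h2 : mu * w i0 = ∑ j, A i0 j * w j := by
    have := congrFun hAw i0
    simpa [mulVec, dotProduct, mul_comm] using this.symm
  have h3 : lam * v i0 ≤ t * (mu * w i0) := by
    rw [h1, h2, Finset.mul_sum]
    apply Finset.sum_le_sum
    intro j _
    have := hle j
    calc A i0 j * v j ≤ A i0 j * (t * w j) :=
      mul_le_mul_of_nonneg_left (hle j) (hA i0 j).le
    _ = t * (A i0 j * w j) := by ring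
  have h4 : t * w i0 = v i0 := by
    rw [ht, div_mul_cancel₀ _ (hw i0).ne']
  have h5 : t * (mu * w i0) = mu * v i0 := by rw [← h4]; ring
  exact le_of_mul_le_mul_right (by linarith) (hv i0)

lemma perron_unique {n : ℕ} (A : Matrix (Fin n) (Fin n) ℝ) (hA : ∀ i j, 0 < A i j)
    (v w : Fin n → ℝ) (hv : ∀ i, 0 < v i) (hw : ∀ i, 0 < w i)
    (lam mu : ℝ) (hAv : A *ᵥ v = lam • v) (hAw : A *ᵥ w = mu • w) (hn : n ≠ 0) :
    ∃ c : ℝ, 0 < c ∧ w = c • v := by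
  have heq : lam = mu :=
    le_antisymm (perron_le A hA v w hv hw lam mu hAv hAw hn)
      (perron_le A hA w v hw hv mu lam hAw hAv hn)
  subst heq
  have hne : (Finset.univ : Finset (Fin n)).Nonempty :=
    ⟨⟨0, Nat.pos_of_ne_zero hn⟩, Finset.mem_univ _⟩
  obtain ⟨i0, -, hi0⟩ := Finset.exists_min_image Finset.univ (fun i => w i / v i) hne
  set t := w i0 / v i0 with ht
  have htpos : 0 < t := div_pos (hw i0) (hv i0)
  refine ⟨t, htpos, ?_⟩
  have hle : ∀ i, t * v i ≤ w i := by
    intro i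
    have := hi0 i (Finset.mem_univ i)
    calc t * v i ≤ (w i / v i) * v i := mul_le_mul_of_nonneg_right this (hv i).le
    _ = w i := by rw [div_mul_cancel₀ _ (hv i).ne']
  have h4 : t * v i0 = w i0 := by rw [ht, div_mul_cancel₀ _ (hv i0).ne']
  -- u = w - t v is nonneg, eigenvector, zero at i0
  have hzero : ∀ j, w j - t * v j = 0 := by
    by_contra hcon
    push_neg at hcon
    obtain ⟨j0, hj0⟩ := hcon
    have hj0' : 0 < w j0 - t * v j0 := lt_of_le_of_ne (by linarith [hle j0]) (Ne.symm hj0)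
    have h1 : lam * v i0 = ∑ j, A i0 j * v j := by
      have := congrFun hAv i0
      simpa [mulVec, dotProduct, mul_comm] using this.symm
    have h2 : lam * w i0 = ∑ j, A i0 j * w j := by
      have := congrFun hAw i0
      simpa [mulVec, dotProduct, mul_comm] using this.symm
    have h5 : ∑ j, A i0 j * (w j - t * v j) = 0 := by
      have : ∑ j, A i0 j * (w j - t * v j)
          = (∑ j, A i0 j * w j) - t * ∑ j, A i0 j * v j := by
        rw [Finset.mul_sum, ← Finset.sum_sub_distrib]
        congr 1; ext j; ring
      rw [this, ← h1, ← h2, ← h4]; ring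
    have h6 : A i0 j0 * (w j0 - t * v j0) ≤ ∑ j, A i0 j * (w j - t * v j) := by
      apply Finset.single_le_sum (f := fun j => A i0 j * (w j - t * v j))
      · intro j _
        exact mul_nonneg (hA i0 j).le (by linarith [hle j])
      · exact Finset.mem_univ j0
    nlinarith [hA i0 j0]
  funext j
  have := hzero j
  simp only [Pi.smul_apply, smul_eq_mul]
  linarith

lemma eigen_pow {n : ℕ} (B : Matrix (Fin n) (Fin n) ℝ) (v : Fin n → ℝ) (c : ℝ)
    (h : B *ᵥ v = c • v) (k : ℕ) : (B ^ k) *ᵥ v = c ^ k • v := by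
  induction k with
  | zero => simp
  | succ m ih =>
    rw [pow_succ, pow_succ, ← mulVec_mulVec, h, mulVec_smul, ih, smul_smul, mul_comm]

set_option synthInstance.maxHeartbeats 1000000 in

/-- Let `v ∈ ℝ₊ⁿ` be a ℚ-basis of a number field `K ⊆ ℝ` of degree `n`, `ε` a unit of `O_K`,
and `M = (T_ε^v)ᵀ` a primitive nonnegative integer matrix. If `σ : K → ℂ` is an embedding
with `σ(v) ≠ v`, then some component of `σ(v)` is not a positive real number. -/
theorem stmt12 (n : ℕ) (K : IntermediateField ℚ ℝ) (b : Module.Basis (Fin n) ℚ K)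
    (hpos : ∀ i, 0 < (b i : ℝ))
    (ε : K) (hε0 : ε ≠ 0) (hε1 : IsIntegral ℤ ε) (hε2 : IsIntegral ℤ ε⁻¹)
    (M : Matrix (Fin n) (Fin n) ℚ)
    (hM : M = (LinearMap.toMatrix b b (LinearMap.mulLeft ℚ ε))ᵀ)
    (hint : ∀ i j, ∃ z : ℤ, M i j = z) (hnn : ∀ i j, 0 ≤ M i j)
    (hprim : ∃ k : ℕ, ∀ i j, 0 < (M ^ k) i j)
    (σ : K →+* ℂ)
    (hne : (fun i => σ (b i)) ≠ fun i => ((b i : ℝ) : ℂ)) :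
    ¬ ∀ i, (σ (b i)).im = 0 ∧ 0 < (σ (b i)).re := by
  intro h
  rcases Nat.eq_zero_or_pos n with hn | hn
  · subst hn
    exact hne (funext fun i => i.elim0)
  have hn0 : n ≠ 0 := hn.ne'
  set v : Fin n → ℝ := fun i => (b i : ℝ) with hv_def
  set w : Fin n → ℝ := fun i => (σ (b i)).re with hw_def
  have hσb : ∀ i, σ (b i) = ((w i : ℝ) : ℂ) := by
    intro i
    apply Complex.ext
    · rfl
    · simpa using (h i).1
  -- key identity in K
  have hKey : ∀ j, ε * b j = ∑ i, (M j i) • b i := by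
    intro j
    rw [hM]
    simp only [transpose_apply, LinearMap.toMatrix_apply, LinearMap.mulLeft_apply]
    exact (b.sum_repr (ε * b j)).symm
  set A0 : Matrix (Fin n) (Fin n) ℝ := ((Rat.castHom ℝ).mapMatrix M) with hA0
  -- real eigen equation
  have hAv : A0 *ᵥ v = ((ε : ℝ)) • v := by
    funext j
    have hk' : (ε : ℝ) * v j = ∑ i, (M j i : ℝ) * v i := by
      have h2 := congrArg (fun x : ↥K => (x : ℝ)) (hKey j)
      push_cast at h2
      exact h2
    simp only [mulVec, dotProduct, Pi.smul_apply, smul_eq_mul, hA0,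
      RingHom.mapMatrix_apply, Matrix.map_apply, eq_ratCast]
    rw [← hk']
  -- complex eigen equation
  have hs : ∀ j, σ ε * σ (b j) = ∑ i, (M j i : ℂ) * σ (b i) := by
    intro j
    have hk := congrArg σ (hKey j)
    rw [_root_.map_mul, map_sum] at hk
    rw [hk]
    congr 1
    funext i
    rw [Rat.smul_def, _root_.map_mul, map_ratCast]
  -- σ ε is real
  have hεre : σ ε = (((σ ε).re : ℝ) : ℂ) := by
    have := congrArg Complex.im (hs ⟨0, hn⟩)
    rw [hσb ⟨0, hn⟩] at this
    simp only [Complex.mul_im, Complex.ofReal_re, Complex.ofReal_im, mul_zero, add_zero] at this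
    have him : (σ ε).im = 0 := by
      have hw0 : 0 < w ⟨0, hn⟩ := (h ⟨0, hn⟩).2
      have hsum : (∑ i, (M (⟨0, hn⟩ : Fin n) i : ℂ) * σ (b i)).im = 0 := by
        rw [Complex.im_sum]
        apply Finset.sum_eq_zero
        intro i _
        rw [hσb i]
        simp
      rw [hsum] at this
      exact (mul_eq_zero.mp (by linarith)).resolve_right hw0.ne'
    apply Complex.ext <;> simp [him]
  set mu : ℝ := (σ ε).re with hmu
  have hAw : A0 *ᵥ w = mu • w := by
    funext j
    have := hs j
    rw [hεre, hσb j] at this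
    have hrhs : ∑ i, (M j i : ℂ) * σ (b i) = (((∑ i, (M j i : ℝ) * w i : ℝ)) : ℂ) := by
      rw [Complex.ofReal_sum]
      congr 1; funext i
      rw [hσb i]
      push_cast
      ring
    rw [hrhs, ← Complex.ofReal_mul] at this
    have := Complex.ofReal_injective this
    simpa [mulVec, dotProduct, hA0] using this.symm
  -- primitivity
  obtain ⟨k, hk⟩ := hprim
  set A : Matrix (Fin n) (Fin n) ℝ := A0 ^ k with hA_def
  have hApos : ∀ i j, 0 < A i j := by
    intro i j
    have : A = ((Rat.castHom ℝ).mapMatrix (M ^ k)) := by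
      rw [hA_def, hA0, map_pow]
    rw [this]
    simpa using hk i j
  have hAv' : A *ᵥ v = ((ε : ℝ)) ^ k • v := eigen_pow A0 v _ hAv k
  have hAw' : A *ᵥ w = mu ^ k • w := eigen_pow A0 w _ hAw k
  obtain ⟨c, hc, hwv⟩ := perron_unique A hApos v w hpos (fun i => (h i).2) _ _ hAv' hAw' hn0
  -- c = 1 using σ(1) = 1
  have hone : (1 : K) = ∑ i, (b.repr 1 i) • b i := (b.sum_repr 1).symm
  have honeC := congrArg σ hone
  rw [_root_.map_one, map_sum] at honeC
  have honeR' : (1 : ℝ) = ∑ i, (b.repr 1 i : ℝ) * v i := by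
    have h2 := congrArg (fun x : ↥K => (x : ℝ)) hone
    push_cast at h2
    exact h2
  have honeC' : (1 : ℂ) = (((∑ i, (b.repr 1 i : ℝ) * w i : ℝ)) : ℂ) := by
    rw [honeC, Complex.ofReal_sum]
    congr 1; funext i
    rw [Rat.smul_def, _root_.map_mul, map_ratCast, hσb i]
    push_cast
    ring
  have hsum1 : ∑ i, (b.repr 1 i : ℝ) * w i = 1 := by
    exact_mod_cast honeC'.symm
  have hc1 : c = 1 := by
    have : ∑ i, (b.repr 1 i : ℝ) * w i = c * ∑ i, (b.repr 1 i : ℝ) * v i := by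
      rw [hwv, Finset.mul_sum]
      congr 1; funext i
      simp only [Pi.smul_apply, smul_eq_mul]
      ring
    rw [hsum1, ← honeR'] at this
    linarith
  apply hne
  funext i
  rw [hσb i, hwv]
  simp [hc1, hv_def]
end

section
/- Let y be an algebraic number of degree n with minimal polynomial x^n + α_{n-1}x^{n-1} + … + α_1 x + α_0 where α_0 > 0, and let v = (y^{n-1},…,y,1)^T. If ε ∈ O_{Q(y)}^× is a unit such that T_ε^v is a matrix with all entries nonnegative integers and determinant 1, then T_ε^v is the identity matrix. -/
open Matrix

/-- Let `y` be algebraic of degree `n` with monic minimal polynomial having positive constant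
coefficient `α 0`, and `v = (y^{n-1},…,y,1)` the power basis of `ℚ(y)`. If `ε` is an algebraic
unit of `ℚ(y)` whose multiplication matrix `T_ε^v` has all entries nonnegative integers and
determinant `1`, then `T_ε^v` is the identity matrix. -/
theorem stmt13 (n : ℕ) (K : Type*) [Field K] [Algebra ℚ K]
    (y : K) (α : ℕ → ℚ) (hα0 : 0 < α 0)
    (hy : (∑ r ∈ Finset.range n, algebraMap ℚ K (α r) * y ^ r) + y ^ n = 0)
    (b : Module.Basis (Fin n) ℚ K) (hb : ∀ i : Fin n, b i = y ^ (n - 1 - (i : ℕ)))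
    (e : K) (he0 : e ≠ 0) (he1 : IsIntegral ℤ e) (he2 : IsIntegral ℤ e⁻¹)
    (T : Matrix (Fin n) (Fin n) ℚ)
    (hT : T = LinearMap.toMatrix b b (LinearMap.mulLeft ℚ e))
    (hnn : ∀ i j, 0 ≤ T i j) (hint : ∀ i j, ∃ z : ℤ, T i j = z)
    (hdet : T.det = 1) : T = 1 := by
  cases n with
  | zero => ext i j; exact i.elim0
  | succ m =>
  -- helper to transport along equal indices
  have hTmk : ∀ (a a' c c' : ℕ) (ha : a < m+1) (ha' : a' < m+1) (hc : c < m+1)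
      (hc' : c' < m+1), a = a' → c = c' →
      T ⟨a, ha⟩ ⟨c, hc⟩ = T ⟨a', ha'⟩ ⟨c', hc'⟩ := by
    intro a a' c c' ha ha' hc hc' h h'
    subst h; subst h'; rfl
  have hbm : ∀ i : Fin (m+1), b i = y ^ (m - (i : ℕ)) := by
    intro i; rw [hb]; congr 1 <;> omega
  have hpow : ∀ (r : ℕ), r ≤ m → ∀ (h : m - r < m+1), b ⟨m - r, h⟩ = y ^ r := by
    intro r hr h; rw [hbm]; congr 1; show m - (m - r) = r; omega
  have hTrepr : ∀ i j : Fin (m+1), T i j = b.repr (e * b j) i := by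
    intro i j
    rw [hT, LinearMap.toMatrix_apply, LinearMap.mulLeft_apply]
  -- representation of y^(m+1)
  have hyn : ∀ k : Fin (m+1), b.repr (y ^ (m+1)) k = -α (m - (k : ℕ)) := by
    intro k
    have h1 : (y : K) ^ (m+1)
        = ∑ r ∈ Finset.range (m+1), (-α r) • b ⟨m - r, by omega⟩ := by
      have h2 : ∀ r ∈ Finset.range (m+1),
          (-α r) • b ⟨m - r, by omega⟩ = -(algebraMap ℚ K (α r) * y ^ r) := by
        intro r hr
        have hr' : r ≤ m := by have := Finset.mem_range.mp hr; omega
        rw [hpow r hr' (by omega), neg_smul, Algebra.smul_def]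
      rw [Finset.sum_congr rfl h2, Finset.sum_neg_distrib]
      linear_combination hy
    rw [h1, map_sum, Finset.sum_apply']
    have h3 : ∀ r ∈ Finset.range (m+1),
        (b.repr ((-α r) • b ⟨m - r, by omega⟩)) k
          = (if r = m - (k : ℕ) then -α (m - (k : ℕ)) else 0) := by
      intro r hr
      rw [_root_.map_smul, Module.Basis.repr_self, Finsupp.smul_apply, Finsupp.single_apply]
      have hr' : r < m + 1 := Finset.mem_range.mp hr
      have hk' : (k : ℕ) < m + 1 := k.isLt
      by_cases hc : r = m - (k : ℕ)
      · have hpos : (⟨m - r, by omega⟩ : Fin (m+1)) = k := by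
          apply Fin.ext
          show m - r = (k : ℕ)
          omega
        rw [if_pos hpos, if_pos hc, hc]; simp
      · have hne : (⟨m - r, by omega⟩ : Fin (m+1)) ≠ k := by
          intro h
          have hv : m - r = (k : ℕ) := congrArg Fin.val h
          omega
        rw [if_neg hne, if_neg hc]; simp
    rw [Finset.sum_congr rfl h3, Finset.sum_ite_eq' (Finset.range (m+1))]
    rw [if_pos (Finset.mem_range.mpr (by omega))]
  -- master recurrence
  have h1 : ∀ (k j : Fin (m+1)), 1 ≤ (j : ℕ) →
      T k ⟨(j : ℕ) - 1, by omega⟩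
        = T ⟨0, by omega⟩ j * (-α (m - (k : ℕ)))
          + (if h : (k : ℕ) + 1 ≤ m then T ⟨(k : ℕ) + 1, by omega⟩ j else 0) := by
    intro k j hj
    have e1 : e * b j = ∑ i : Fin (m+1), T i j • b i := by
      calc e * b j = ∑ i : Fin (m+1), b.repr (e * b j) i • b i := (b.sum_repr _).symm
        _ = ∑ i : Fin (m+1), T i j • b i :=
            Finset.sum_congr rfl fun i _ => by rw [hTrepr]
    have e2 : e * b ⟨(j : ℕ) - 1, by omega⟩ = y * (e * b j) := by
      rw [hbm, hbm]
      have hh : m - ((j : ℕ) - 1) = (m - (j : ℕ)) + 1 := by omega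
      simp only [hh, pow_succ]
      ring
    have e3 : e * b ⟨(j : ℕ) - 1, by omega⟩ = ∑ i : Fin (m+1), T i j • (y * b i) := by
      rw [e2, e1, Finset.mul_sum]
      exact Finset.sum_congr rfl fun i _ => (mul_smul_comm _ _ _)
    have e4 : T k ⟨(j : ℕ) - 1, by omega⟩
        = ∑ i : Fin (m+1), T i j * (b.repr (y * b i)) k := by
      rw [hTrepr, e3, map_sum, Finset.sum_apply']
      exact Finset.sum_congr rfl fun i _ => by
        rw [_root_.map_smul, Finsupp.smul_apply, smul_eq_mul]
    have e5 : ∀ i : Fin (m+1), (b.repr (y * b i)) k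
        = if (i : ℕ) = 0 then -α (m - (k : ℕ))
          else (if (k : ℕ) + 1 = (i : ℕ) then 1 else 0) := by
      intro i
      rcases Nat.eq_zero_or_pos (i : ℕ) with h0 | h0
      · rw [hbm, h0, if_pos rfl, Nat.sub_zero]
        rw [show y * y ^ m = y ^ (m+1) from (pow_succ' y m).symm]
        exact hyn k
      · rw [hbm]
        have hy2 : y * y ^ (m - (i : ℕ)) = y ^ (m - ((i : ℕ) - 1)) := by
          rw [← pow_succ']
          congr 1
          omega
        rw [hy2, ← hpow (m - ((i : ℕ) - 1)) (by omega) (by omega),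
          Module.Basis.repr_self, Finsupp.single_apply, if_neg (by omega : ¬ (i : ℕ) = 0)]
        have hiff : ((⟨m - (m - ((i : ℕ) - 1)), by omega⟩ : Fin (m+1)) = k)
            ↔ ((k : ℕ) + 1 = (i : ℕ)) := by
          rw [Fin.ext_iff]
          have hk := k.isLt
          have hi := i.isLt
          simp only []
          omega
        rw [if_congr hiff rfl rfl]
    rw [e4]
    have e6 : ∀ i : Fin (m+1), T i j * (b.repr (y * b i)) k
        = T i j * (if (i : ℕ) = 0 then -α (m - (k : ℕ))
            else (if (k : ℕ) + 1 = (i : ℕ) then 1 else 0)) := fun i => by rw [e5]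
    rw [Finset.sum_congr rfl fun i _ => e6 i]
    rw [← Finset.sum_erase_add _ _ (Finset.mem_univ (⟨0, by omega⟩ : Fin (m+1)))]
    have e7 : T ⟨0, by omega⟩ j * (if ((⟨0, by omega⟩ : Fin (m+1)) : ℕ) = 0
        then -α (m - (k : ℕ)) else (if (k : ℕ) + 1 = ((⟨0, by omega⟩ : Fin (m+1)) : ℕ)
          then 1 else 0)) = T ⟨0, by omega⟩ j * (-α (m - (k : ℕ))) := by
      rw [if_pos rfl]
    rw [e7, add_comm]
    congr 1
    by_cases hk : (k : ℕ) + 1 ≤ m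
    · rw [dif_pos hk]
      rw [Finset.sum_eq_single_of_mem (⟨(k : ℕ) + 1, by omega⟩ : Fin (m+1))]
      · rw [if_neg (by simp), if_pos (by simp)]
        ring
      · refine Finset.mem_erase.mpr ⟨?_, Finset.mem_univ _⟩
        exact fun h => Nat.succ_ne_zero _ (congrArg Fin.val h)
      · intro i hi hine
        have hi0 : (i : ℕ) ≠ 0 := by
          intro h
          exact (Finset.mem_erase.mp hi).1 (Fin.ext h)
        rw [if_neg hi0, if_neg, mul_zero]
        intro h
        exact hine (Fin.ext (by simp; omega))
    · rw [dif_neg hk]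
      refine Finset.sum_eq_zero fun i hi => ?_
      have hi0 : (i : ℕ) ≠ 0 := by
        intro h
        exact (Finset.mem_erase.mp hi).1 (Fin.ext h)
      have := i.isLt
      rw [if_neg hi0, if_neg (by omega), mul_zero]
  -- zero entries in first and last rows
  have hZ : ∀ j : Fin (m+1), 1 ≤ (j : ℕ) →
      T ⟨0, by omega⟩ j = 0 ∧ T ⟨m, by omega⟩ ⟨(j : ℕ) - 1, by omega⟩ = 0 := by
    intro j hj
    have h := h1 ⟨m, by omega⟩ j hj
    rw [dif_neg (by simp only [Fin.val_mk]; omega)] at h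
    simp only [Fin.val_mk, Nat.sub_self, add_zero] at h
    have hA := hnn ⟨0, by omega⟩ j
    have hB := hnn ⟨m, by omega⟩ ⟨(j : ℕ) - 1, by omega⟩
    constructor <;> nlinarith [hα0, h]
  -- diagonal shift
  have hS : ∀ (p q : ℕ) (hp : p < m) (hq : q < m),
      T ⟨p + 1, by omega⟩ ⟨q + 1, by omega⟩ = T ⟨p, by omega⟩ ⟨q, by omega⟩ := by
    intro p q hp hq
    have h := h1 ⟨p, by omega⟩ ⟨q + 1, by omega⟩ (by simp)
    rw [dif_pos (by simp only [Fin.val_mk]; omega)] at h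
    have hz := (hZ ⟨q + 1, by omega⟩ (by simp)).1
    rw [hz, zero_mul, zero_add] at h
    simp only [Fin.val_mk, Nat.add_sub_cancel] at h
    exact h.symm
  have hchain : ∀ (t p q : ℕ) (hp : p + t ≤ m) (hq : q + t ≤ m),
      T ⟨p + t, by omega⟩ ⟨q + t, by omega⟩ = T ⟨p, by omega⟩ ⟨q, by omega⟩ := by
    intro t
    induction t with
    | zero => intro p q hp hq; exact hTmk _ _ _ _ _ _ _ _ (by omega) (by omega)
    | succ t ih =>
      intro p q hp hq
      calc T ⟨p + (t+1), by omega⟩ ⟨q + (t+1), by omega⟩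
          = T ⟨(p + t) + 1, by omega⟩ ⟨(q + t) + 1, by omega⟩ :=
            hTmk _ _ _ _ _ _ _ _ (by omega) (by omega)
        _ = T ⟨p + t, by omega⟩ ⟨q + t, by omega⟩ := hS _ _ (by omega) (by omega)
        _ = T ⟨p, by omega⟩ ⟨q, by omega⟩ := ih p q (by omega) (by omega)
  -- all off-diagonal entries vanish
  have hoff : ∀ i j : Fin (m+1), i ≠ j → T i j = 0 := by
    intro i j hij
    have hvne : (i : ℕ) ≠ (j : ℕ) := fun h => hij (Fin.ext h)
    rcases Nat.lt_or_ge (i : ℕ) (j : ℕ) with hlt | hge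
    · have hc := hchain (i : ℕ) 0 ((j : ℕ) - (i : ℕ)) (by omega)
        (by have := j.isLt; omega)
      have hL : T i j = T ⟨0 + (i : ℕ), by omega⟩
          ⟨((j : ℕ) - (i : ℕ)) + (i : ℕ), by have := j.isLt; omega⟩ := by
        have h1' : i = (⟨0 + (i : ℕ), by omega⟩ : Fin (m+1)) := Fin.ext (by simp only [Fin.val_mk]; omega)
        have h2' : j = (⟨((j : ℕ) - (i : ℕ)) + (i : ℕ), by have := j.isLt; omega⟩
            : Fin (m+1)) := Fin.ext (by simp only [Fin.val_mk]; omega)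
        rw [← h1', ← h2']
      rw [hL, hc]
      exact (hZ ⟨(j : ℕ) - (i : ℕ), by have := j.isLt; omega⟩ (by simp; omega)).1
    · have hlt' : (j : ℕ) < (i : ℕ) := by omega
      have him := i.isLt
      have hjm := j.isLt
      have hc := hchain (m - (i : ℕ)) (i : ℕ) (j : ℕ) (by omega) (by omega)
      have hL : T i j = T ⟨(i : ℕ), by omega⟩ ⟨(j : ℕ), by omega⟩ := by
        have h1' : i = (⟨(i : ℕ), by omega⟩ : Fin (m+1)) := Fin.ext rfl
        have h2' : j = (⟨(j : ℕ), by omega⟩ : Fin (m+1)) := Fin.ext rfl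
        rw [← h1', ← h2']
      rw [hL, ← hc]
      have hz := (hZ ⟨(j : ℕ) + (m - (i : ℕ)) + 1, by omega⟩ (by simp)).2
      rw [← hz]
      exact hTmk _ _ _ _ _ _ _ _ (by omega) (by simp)
  -- diagonal entries are all equal
  have hdiag : ∀ i : Fin (m+1), T i i = T ⟨0, by omega⟩ ⟨0, by omega⟩ := by
    intro i
    have hc := hchain (i : ℕ) 0 0 (by have := i.isLt; omega) (by have := i.isLt; omega)
    have hL : T i i = T ⟨0 + (i : ℕ), by have := i.isLt; omega⟩
        ⟨0 + (i : ℕ), by have := i.isLt; omega⟩ := by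
      have h1' : i = (⟨0 + (i : ℕ), by have := i.isLt; omega⟩ : Fin (m+1)) :=
        Fin.ext (by simp only [Fin.val_mk]; omega)
      rw [← h1']
    rw [hL, hc]
  -- T is scalar
  set c : ℚ := T ⟨0, by omega⟩ ⟨0, by omega⟩ with hc
  have hTdiag : T = Matrix.diagonal (fun _ => c) := by
    ext i j
    by_cases h : i = j
    · subst h; rw [Matrix.diagonal_apply_eq, hdiag]
    · rw [Matrix.diagonal_apply_ne _ h, hoff i j h]
  have hcpow : c ^ (m + 1) = 1 := by
    rw [hTdiag, Matrix.det_diagonal, Finset.prod_const] at hdet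
    simpa using hdet
  have hcnn : 0 ≤ c := hnn _ _
  have hc1 : c = 1 := by
    rcases lt_trichotomy c 1 with h | h | h
    · have := pow_lt_one₀ hcnn h (Nat.succ_ne_zero m)
      rw [hcpow] at this; exact absurd this (lt_irrefl 1)
    · exact h
    · have := one_lt_pow₀ h (Nat.succ_ne_zero m)
      rw [hcpow] at this; exact absurd this (lt_irrefl 1)
  rw [hTdiag, hc1]
  ext i j
  by_cases h : i = j
  · subst h; simp
  · simp [Matrix.diagonal_apply_ne _ h, Matrix.one_apply_ne h]
end

section
/- Let y be the unique positive root of y^3 + y^2 − 2y − 1 = 0 and let v = (y^2, y, 1)^T. Set M_1 = [[1,1,0],[0,1,1],[1,1,−1]] and M_2 = [[−1,1,1],[1,0,−1],[−1,0,2]]. Then M_1 v = ε_1 v and M_2 v = ε_2 v, where ε_1 = −1 + y + y^2 and ε_2 = 2 − y^2 are units in the ring of integers of Q(y). -/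
open Matrix

lemma stmt14_yint {y : ℝ} (hy : y ^ 3 + y ^ 2 - 2 * y - 1 = 0) : IsIntegral ℤ y := by
  refine ⟨Polynomial.X ^ 3 + Polynomial.X ^ 2 - 2 * Polynomial.X - 1, ?_, ?_⟩
  · monicity!
  · simp only [Polynomial.eval₂_sub, Polynomial.eval₂_add, Polynomial.eval₂_pow,
      Polynomial.eval₂_mul, Polynomial.eval₂_X, Polynomial.eval₂_one, Polynomial.eval₂_ofNat]
    push_cast
    linarith [hy]

/-- For the unique positive root `y` of `y³ + y² − 2y − 1 = 0` and `v = (y², y, 1)`: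
`M₁ v = ε₁ v` and `M₂ v = ε₂ v` where `ε₁ = −1 + y + y²` and `ε₂ = 2 − y²` are algebraic
units. -/
theorem stmt14 (y : ℝ) (hpos : 0 < y) (hy : y ^ 3 + y ^ 2 - 2 * y - 1 = 0)
    (huniq : ∀ x : ℝ, 0 < x → x ^ 3 + x ^ 2 - 2 * x - 1 = 0 → x = y) :
    (!![1, 1, 0; 0, 1, 1; 1, 1, -1] : Matrix (Fin 3) (Fin 3) ℝ) *ᵥ ![y ^ 2, y, 1] =
      (-1 + y + y ^ 2) • ![y ^ 2, y, 1] ∧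
    (!![-1, 1, 1; 1, 0, -1; -1, 0, 2] : Matrix (Fin 3) (Fin 3) ℝ) *ᵥ ![y ^ 2, y, 1] =
      (2 - y ^ 2) • ![y ^ 2, y, 1] ∧
    IsIntegral ℤ (-1 + y + y ^ 2) ∧ IsIntegral ℤ (-1 + y + y ^ 2)⁻¹ ∧
    IsIntegral ℤ (2 - y ^ 2) ∧ IsIntegral ℤ (2 - y ^ 2)⁻¹ := by
  have hyint : IsIntegral ℤ y := stmt14_yint hy
  have hsq : IsIntegral ℤ (y ^ 2) := hyint.pow 2
  have hone : IsIntegral ℤ (1 : ℝ) := isIntegral_one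
  have h1 : IsIntegral ℤ (-1 + y + y ^ 2) := ((hone.neg).add hyint).add hsq
  have h2 : IsIntegral ℤ (2 - y ^ 2) := by
    have := (hone.add hone).sub hsq; norm_num at this; exact this
  have hinv1 : (-1 + y + y ^ 2)⁻¹ = y ^ 2 - 1 := by
    exact inv_eq_of_mul_eq_one_right (by nlinarith [hy])
  have hinv2 : (2 - y ^ 2)⁻¹ = 1 + y := by
    exact inv_eq_of_mul_eq_one_right (by nlinarith [hy])
  refine ⟨?_, ?_, h1, ?_, h2, ?_⟩
  · funext i
    fin_cases i <;> simp [Matrix.mulVec, dotProduct, Fin.sum_univ_three] <;> nlinarith [hy]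
  · funext i
    fin_cases i <;> simp [Matrix.mulVec, dotProduct, Fin.sum_univ_three] <;> nlinarith [hy]
  · rw [hinv1]; exact hsq.sub hone
  · rw [hinv2]; exact hone.add hyint
end

section
/- Let s, t ∈ Q_+ with t > s and t > s²/4. Then the cubic polynomial x^3 + s x^2 + t x − 1 has negative discriminant; consequently it has exactly one real root, which lies in the interval (0,1), and the field generated by this root is a complex cubic field. -/
/-- For positive rationals `s, t` with `t > s` and `t > s²/4`, the cubic `x³ + sx² + tx − 1`
has negative discriminant; consequently it has exactly one real root, which lies in `(0,1)`,
and it has a non-real complex root (the generated field is a complex cubic field). -/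
theorem stmt16 (s t : ℚ) (hs : 0 < s) (ht : 0 < t) (hts : t > s) (ht4 : t > s ^ 2 / 4) :
    (-18 * s * t + 4 * s ^ 3 + s ^ 2 * t ^ 2 - 4 * t ^ 3 - 27 < 0) ∧
    (∃! x : ℝ, x ^ 3 + (s : ℝ) * x ^ 2 + (t : ℝ) * x - 1 = 0) ∧
    (∀ x : ℝ, x ^ 3 + (s : ℝ) * x ^ 2 + (t : ℝ) * x - 1 = 0 → 0 < x ∧ x < 1) ∧
    (∃ z : ℂ, z ^ 3 + (s : ℂ) * z ^ 2 + (t : ℂ) * z - 1 = 0 ∧ z.im ≠ 0) := by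
  have hs' : (0:ℝ) < s := by exact_mod_cast hs
  have ht' : (0:ℝ) < t := by exact_mod_cast ht
  have hts' : (s:ℝ) < t := by exact_mod_cast hts
  have ht4' : (s:ℝ)^2 < 4 * t := by
    have : (s:ℝ)^2/4 < t := by exact_mod_cast ht4
    linarith
  -- roots lie in (0,1)
  have hloc : ∀ x : ℝ, x ^ 3 + (s : ℝ) * x ^ 2 + (t : ℝ) * x - 1 = 0 → 0 < x ∧ x < 1 := by
    intro x hx
    constructor
    · by_contra h
      push_neg at h
      have hq : 0 < x^2 + s*x + t := by nlinarith [sq_nonneg (2*x + s)]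
      have : x * (x^2 + s*x + t) ≤ 0 := mul_nonpos_of_nonpos_of_nonneg h hq.le
      nlinarith
    · by_contra h
      push_neg at h
      nlinarith [sq_nonneg x, mul_le_mul h h (by linarith) (le_trans zero_le_one h)]
  -- existence of a real root via IVT
  have hcont : Continuous (fun x : ℝ => x ^ 3 + (s:ℝ) * x ^ 2 + (t:ℝ) * x - 1) := by continuity
  have h0mem : (0:ℝ) ∈ Set.Icc ((fun x : ℝ => x ^ 3 + (s:ℝ) * x ^ 2 + (t:ℝ) * x - 1) 0)
      ((fun x : ℝ => x ^ 3 + (s:ℝ) * x ^ 2 + (t:ℝ) * x - 1) 1) := by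
    refine ⟨by simp, by simp; nlinarith⟩
  obtain ⟨y, hy01, hy⟩ := intermediate_value_Icc (by norm_num : (0:ℝ) ≤ 1)
    hcont.continuousOn h0mem
  have hy : y ^ 3 + (s:ℝ) * y ^ 2 + (t:ℝ) * y - 1 = 0 := hy
  have hy0 : 0 < y := (hloc y hy).1
  -- uniqueness
  have huniq : ∀ x : ℝ, x ^ 3 + (s:ℝ) * x ^ 2 + (t:ℝ) * x - 1 = 0 → x = y := by
    intro x hx
    have hx0 : 0 < x := (hloc x hx).1
    have hfac : (x - y) * (x^2 + x*y + y^2 + s*(x + y) + t) = 0 := by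
      linear_combination hx - hy
    have hpos : 0 < x^2 + x*y + y^2 + s*(x + y) + t := by
      nlinarith [mul_pos hx0 hy0, sq_nonneg x, sq_nonneg y]
    rcases mul_eq_zero.1 hfac with h | h
    · linarith
    · linarith
  refine ⟨?_, ⟨y, hy, huniq⟩, hloc, ?_⟩
  · nlinarith [mul_pos (show (0:ℚ) < 4*t - s^2 by linarith) (show (0:ℚ) < t^2 + 4*s by positivity),
      mul_pos hs ht]
  · -- complex root of the quadratic factor
    set D : ℝ := 3*y^2 + 2*s*y + (4*t - s^2) with hDdef
    have hD : 0 < D := by nlinarith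
    set w : ℝ := Real.sqrt D with hwdef
    have hw : w^2 = 3*y^2 + 2*s*y + (4*t - s^2) := Real.sq_sqrt hD.le
    have hw0 : 0 < w := Real.sqrt_pos.2 hD
    have hwC : (w:ℂ)^2 = 3*(y:ℂ)^2 + 2*(s:ℂ)*(y:ℂ) + (4*(t:ℂ) - (s:ℂ)^2) := by
      exact_mod_cast congrArg (fun r : ℝ => (r:ℂ)) hw
    have hyC : (y:ℂ)^3 + (s:ℂ)*(y:ℂ)^2 + (t:ℂ)*(y:ℂ) - 1 = 0 := by
      exact_mod_cast congrArg (fun r : ℝ => (r:ℂ)) hy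
    refine ⟨(↑(-(s + y)/2) : ℂ) + ↑(w/2) * Complex.I, ?_, ?_⟩
    · have hquad : ((↑(-(s + y)/2) : ℂ) + ↑(w/2) * Complex.I)^2
          + ((s:ℂ) + y) * ((↑(-(s + y)/2) : ℂ) + ↑(w/2) * Complex.I)
          + ((t:ℂ) + s*y + (y:ℂ)^2) = 0 := by
        push_cast
        linear_combination (-1/4 : ℂ) * hwC + ((w:ℂ)^2/4) * Complex.I_sq
      linear_combination ((↑(-(s + y)/2) : ℂ) + ↑(w/2) * Complex.I - (y:ℂ)) * hquad + hyC
    · simp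
      positivity
end
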